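/- Let l be (M,m)-(restricted smooth, restricted strongly concave) on the sparse subdomain Ω_{2k}, with 0 < m ≤ M, and define OPT_k := max_{A ⊆ [n], |A| ≤ k} f(A). Then for every set S ⊆ [n] with |S| ≤ k (with the relevant maximizers assumed to exist), it holds that max_{T ⊆ [n], |T| ≤ k} ‖∇l(β^(S))_T‖₂² ≥ 2m · (OPT_k − f(S)). -/

import Mathlib

open scoped BigOperators

noncomputable section

abbrev Euc (n : ℕ) := EuclideanSpace ℝ (Fin n)

/-- Number of nonzero coordinates (the ℓ₀ "norm"). -/
def norm0 {n : ℕ} (x : Euc n) : ℕ := (Finset.univ.filter fun i => x i ≠ 0).card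

/-- `l` is (M,m)-(restricted smooth, restricted strongly concave) on the sparse
subdomain `Ω_r`, with gradient `g`. -/
def IsRSCSM {n : ℕ} (l : Euc n → ℝ) (g : Euc n → Euc n) (M m : ℝ) (r : ℕ) : Prop :=
  ∀ x y : Euc n, norm0 x ≤ r → norm0 y ≤ r → norm0 (x - y) ≤ r →
    (l y - l x - (inner ℝ (g x) (y - x) : ℝ) ≤ -(m / 2) * ‖y - x‖ ^ 2) ∧
    (-(M / 2) * ‖y - x‖ ^ 2 ≤ l y - l x - (inner ℝ (g x) (y - x) : ℝ))

/-- `x` is supported in the index set `S`. -/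
def SuppIn {n : ℕ} (S : Finset (Fin n)) (x : Euc n) : Prop := ∀ i, i ∉ S → x i = 0

/-- The support selection function `f(S) = l(β^(S)) - l(0)`. -/
def fsel {n : ℕ} (l : Euc n → ℝ) (B : Finset (Fin n) → Euc n) (S : Finset (Fin n)) : ℝ :=
  l (B S) - l 0


/-- The collection of all subsets of `[n]` of cardinality at most `k`. -/
def cardLE (n k : ℕ) : Finset (Finset (Fin n)) :=
  (Finset.univ : Finset (Finset (Fin n))).filter fun A => A.card ≤ k

lemma cardLE_nonempty (n k : ℕ) : (cardLE n k).Nonempty :=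
  ⟨∅, by simp [cardLE]⟩

/-- `OPT_k = max_{|A| ≤ k} f(A)`. -/
def OPTk {n : ℕ} (l : Euc n → ℝ) (B : Finset (Fin n) → Euc n) (k : ℕ) : ℝ :=
  (cardLE n k).sup' (cardLE_nonempty n k) (fsel l B)

lemma suppIn_norm0 {n : ℕ} {S : Finset (Fin n)} {x : Euc n} (h : SuppIn S x) :
    norm0 x ≤ S.card := by
  apply Finset.card_le_card
  intro i hi
  simp only [Finset.mem_filter] at hi
  by_contra hiS
  exact hi.2 (h i hiS)

theorem stmt5 {n k : ℕ} (l : Euc n → ℝ) (g : Euc n → Euc n) (M m : ℝ)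
    (hm : 0 < m) (hmM : m ≤ M)
    (hgrad : ∀ x, HasGradientAt l (g x) x)
    (hl : IsRSCSM l g M m (2 * k))
    (B : Finset (Fin n) → Euc n)
    (hB0 : B ∅ = 0)
    (hBsupp : ∀ S, SuppIn S (B S))
    (hBmax : ∀ S x, SuppIn S x → l x ≤ l (B S))
    (S : Finset (Fin n)) (hS : S.card ≤ k) :
    (cardLE n k).sup' (cardLE_nonempty n k) (fun T => ∑ j ∈ T, (g (B S) j) ^ 2)
      ≥ 2 * m * (OPTk l B k - fsel l B S) := by
  obtain ⟨A, hA, hAopt⟩ := Finset.exists_mem_eq_sup' (cardLE_nonempty n k) (fsel l B)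
  have hAk : A.card ≤ k := (Finset.mem_filter.mp hA).2
  set x := B S with hx
  set y := B A with hy
  -- gradient of l at x vanishes on S
  have hg0 : ∀ i ∈ S, g x i = 0 := by
    intro i hi
    have hmax : IsLocalMax (fun t : ℝ => l (x + t • EuclideanSpace.single i (1:ℝ))) 0 := by
      apply Filter.Eventually.of_forall
      intro t
      have hsupp : SuppIn S (x + t • EuclideanSpace.single i (1:ℝ)) := by
        intro j hj
        have hxj := hBsupp S j hj
        have : j ≠ i := fun h => hj (h ▸ hi)
        show B S j + t * (EuclideanSpace.single i (1:ℝ)) j = 0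
        simp [hxj, EuclideanSpace.single_apply, this]
      simpa using hBmax S _ hsupp
    have hc : HasDerivAt (fun t : ℝ => l (x + t • EuclideanSpace.single i (1:ℝ)))
        ((inner ℝ (g x) (EuclideanSpace.single i (1:ℝ)) : ℝ)) 0 := by
      have hcurve : HasDerivAt (fun t : ℝ => x + t • EuclideanSpace.single i (1:ℝ))
          (EuclideanSpace.single i (1:ℝ)) 0 := by
        simpa using ((hasDerivAt_id (0:ℝ)).smul_const
          (EuclideanSpace.single i (1:ℝ))).const_add x
      have hf := (hgrad x).hasFDerivAt
      have : HasFDerivAt l (InnerProductSpace.toDual ℝ (Euc n) (g x)) ((fun t : ℝ => x + t • EuclideanSpace.single i (1:ℝ)) 0) := by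
        simpa using hf
      exact this.comp_hasDerivAt 0 hcurve
    have := hmax.hasDerivAt_eq_zero hc
    simpa [real_inner_comm, EuclideanSpace.inner_single_right] using this
  -- sparsity bounds
  have hxs : norm0 x ≤ 2 * k := le_trans (suppIn_norm0 (hBsupp S)) (by omega)
  have hys : norm0 y ≤ 2 * k := le_trans (suppIn_norm0 (hBsupp A)) (by omega)
  have hd : SuppIn (S ∪ A) (x - y) := by
    intro j hj
    simp only [Finset.mem_union, not_or] at hj
    have := hBsupp S j hj.1
    have := hBsupp A j hj.2
    show B S j - B A j = 0
    simp_all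
  have hxy : norm0 (x - y) ≤ 2 * k := by
    refine le_trans (suppIn_norm0 hd) (le_trans (Finset.card_union_le S A) (by omega))
  have hsc := (hl x y hxs hys hxy).1
  -- key inequality
  have hnorm : ‖y - x‖ ^ 2 = ∑ j, (y j - x j) ^ 2 := by
    rw [← real_inner_self_eq_norm_sq, PiLp.inner_apply]
    simp [sq]
  have hinner : (inner ℝ (g x) (y - x) : ℝ) = ∑ j, g x j * (y j - x j) := by
    rw [PiLp.inner_apply]
    simp [mul_comm]
  have key : 2 * m * (l y - l x) ≤ ∑ j ∈ A, g x j ^ 2 := by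
    have h1 : 2 * m * (l y - l x) ≤
        ∑ j, (2 * m * (g x j * (y j - x j)) - m ^ 2 * (y j - x j) ^ 2) := by
      have h2 : l y - l x ≤ (inner ℝ (g x) (y - x) : ℝ) - (m / 2) * ‖y - x‖ ^ 2 := by
        nlinarith [hsc]
      rw [hinner, hnorm] at h2
      rw [Finset.sum_sub_distrib, ← Finset.mul_sum, ← Finset.mul_sum]
      nlinarith [h2]
    refine le_trans h1 ?_
    have h3 : ∀ j : Fin n, (2 * m * (g x j * (y j - x j)) - m ^ 2 * (y j - x j) ^ 2)
        ≤ (if j ∈ A then g x j ^ 2 else 0) := by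
      intro j
      by_cases hjA : j ∈ A
      · simp only [hjA, if_true]
        nlinarith [sq_nonneg (g x j - m * (y j - x j))]
      · simp only [hjA, if_false]
        by_cases hjS : j ∈ S
        · have := hg0 j hjS
          rw [this]
          nlinarith [sq_nonneg (y j - x j), sq_nonneg m]
        · have h4 : (x - y) j = 0 := hd j (by simp [hjA, hjS])
          have h5 : y j - x j = 0 := by
            have : x j - y j = 0 := by simpa using h4
            linarith
          simp [h5]
    calc ∑ j, (2 * m * (g x j * (y j - x j)) - m ^ 2 * (y j - x j) ^ 2)
        ≤ ∑ j, (if j ∈ A then g x j ^ 2 else 0) := Finset.sum_le_sum fun j _ => h3 j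
      _ = ∑ j ∈ A, g x j ^ 2 := by rw [Finset.sum_ite_mem]; simp
  have hsup : ∑ j ∈ A, g x j ^ 2 ≤
      (cardLE n k).sup' (cardLE_nonempty n k) (fun T => ∑ j ∈ T, (g (B S) j) ^ 2) :=
    Finset.le_sup' (fun T => ∑ j ∈ T, (g (B S) j) ^ 2) hA
  have hopt : OPTk l B k - fsel l B S = l y - l x := by
    rw [OPTk, hAopt, fsel, fsel]
    ring
  rw [ge_iff_le, hopt]
  linarith [key, hsup]
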